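/- arXiv:1309.0177 — 4 statements merged into one kernel-verified Lean document; each statement's English description precedes it below -/
import Mathlib

section
/- Let F : ℝ × ℝ → ℝ be twice continuously differentiable on a neighborhood of (σ₀, n₀) with ∂F/∂σ(σ₀, n₀) > 0, and let G : ℝ × ℝ → ℝ be twice continuously differentiable on a neighborhood of (F(σ₀,n₀), n₀) such that G(F(σ,n), n) = σ for all (σ,n) in a neighborhood of (σ₀,n₀). Then the Hessian (second derivative bilinear form) of F at (σ₀,n₀) is positive definite if and only if the Hessian of G at (F(σ₀,n₀), n₀) is negative definite. -/
open ContinuousLinearMap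
set_option maxHeartbeats 1000000

/-- If `G(F(σ,n), n) = σ` near `(σ₀,n₀)` and `∂F/∂σ(σ₀,n₀) > 0`, then the Hessian of `F`
at `(σ₀,n₀)` is positive definite iff the Hessian of `G` at `(F(σ₀,n₀), n₀)` is
negative definite. -/
theorem hessian_pos_def_iff_inverse_hessian_neg_def
    (F G : ℝ × ℝ → ℝ) (σ₀ n₀ : ℝ)
    (hF : ContDiffAt ℝ 2 F (σ₀, n₀))
    (hFσ : 0 < fderiv ℝ F (σ₀, n₀) (1, 0))
    (hG : ContDiffAt ℝ 2 G (F (σ₀, n₀), n₀))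
    (hGF : ∀ᶠ q : ℝ × ℝ in nhds (σ₀, n₀), G (F q, q.2) = q.1) :
    (∀ v : ℝ × ℝ, v ≠ 0 → 0 < iteratedFDeriv ℝ 2 F (σ₀, n₀) ![v, v]) ↔
      (∀ v : ℝ × ℝ, v ≠ 0 → iteratedFDeriv ℝ 2 G (F (σ₀, n₀), n₀) ![v, v] < 0) := by
  set p : ℝ × ℝ := (σ₀, n₀) with hp
  set Φ : ℝ × ℝ → ℝ × ℝ := fun q => (F q, q.2) with hΦdef
  set A : ℝ × ℝ →L[ℝ] ℝ := fderiv ℝ F p with hA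
  set a : ℝ := A (1, 0) with ha
  have ha0 : 0 < a := hFσ
  -- eventual smoothness
  have hFev : ∀ᶠ q in nhds p, ContDiffAt ℝ 2 F q := hF.eventually (by norm_num)
  have hΦc : ContinuousAt Φ p := (hF.continuousAt).prodMk continuousAt_snd
  have hGev : ∀ᶠ q in nhds p, ContDiffAt ℝ 2 G (Φ q) :=
    hΦc.tendsto.eventually (hG.eventually (by norm_num))
  -- the eventual first-order identity
  set c : ℝ × ℝ → (ℝ × ℝ →L[ℝ] ℝ) := fun q => fderiv ℝ G (Φ q) with hc_def
  set d : ℝ × ℝ → (ℝ × ℝ →L[ℝ] ℝ × ℝ) := fun q => (fderiv ℝ F q).prod (snd ℝ ℝ ℝ) with hd_def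
  have hE : ∀ᶠ q in nhds p, (c q).comp (d q) = fst ℝ ℝ ℝ := by
    filter_upwards [hFev, hGev, hGF.eventually_nhds] with q hFq hGq hGFq
    have hΦq : HasFDerivAt Φ (d q) q :=
      (hFq.differentiableAt (by norm_num)).hasFDerivAt.prodMk hasFDerivAt_snd
    have hcomp : HasFDerivAt (fun x => G (F x, x.2)) ((c q).comp (d q)) q :=
      ((hGq.differentiableAt (by norm_num)).hasFDerivAt.comp q hΦq)
    have hfst : HasFDerivAt (fun x => G (F x, x.2)) (fst ℝ ℝ ℝ) q :=
      hasFDerivAt_fst.congr_of_eventuallyEq (by filter_upwards [hGFq] with x hx using hx)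
    exact hcomp.unique hfst
  -- second derivatives exist
  set BF : ℝ × ℝ →L[ℝ] ℝ × ℝ →L[ℝ] ℝ := fderiv ℝ (fderiv ℝ F) p with hBF_def
  set BG : ℝ × ℝ →L[ℝ] ℝ × ℝ →L[ℝ] ℝ := fderiv ℝ (fderiv ℝ G) (Φ p) with hBG_def
  have hBF : HasFDerivAt (fderiv ℝ F) BF p :=
    ((hF.fderiv_right (m := 1) (by norm_num)).differentiableAt (by norm_num)).hasFDerivAt
  have hBG : HasFDerivAt (fderiv ℝ G) BG (Φ p) :=
    ((hG.fderiv_right (m := 1) (by norm_num)).differentiableAt (by norm_num)).hasFDerivAt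
  set DΦ : ℝ × ℝ →L[ℝ] ℝ × ℝ := A.prod (snd ℝ ℝ ℝ) with hDΦ_def
  have hΦp : HasFDerivAt Φ DΦ p :=
    (hF.differentiableAt (by norm_num)).hasFDerivAt.prodMk hasFDerivAt_snd
  have hdp : d p = DΦ := rfl
  -- derivative of c
  have hc : HasFDerivAt c (BG.comp DΦ) p := hBG.comp p hΦp
  -- derivative of d
  have hd : HasFDerivAt d ((compL ℝ (ℝ × ℝ) ℝ (ℝ × ℝ) (inl ℝ ℝ ℝ)).comp BF) p := by
    have heq : ∀ q : ℝ × ℝ, d q =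
        (compL ℝ (ℝ × ℝ) ℝ (ℝ × ℝ) (inl ℝ ℝ ℝ)) (fderiv ℝ F q) + (inr ℝ ℝ ℝ).comp (snd ℝ ℝ ℝ) := by
      intro q; ext x <;> simp [hd_def]
    have h1 : HasFDerivAt
        (fun q => (compL ℝ (ℝ × ℝ) ℝ (ℝ × ℝ) (inl ℝ ℝ ℝ)) (fderiv ℝ F q) + (inr ℝ ℝ ℝ).comp (snd ℝ ℝ ℝ))
        ((compL ℝ (ℝ × ℝ) ℝ (ℝ × ℝ) (inl ℝ ℝ ℝ)).comp BF) p :=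
      (((compL ℝ (ℝ × ℝ) ℝ (ℝ × ℝ) (inl ℝ ℝ ℝ)).hasFDerivAt.comp p hBF).add_const _)
    exact h1.congr_of_eventuallyEq (Filter.Eventually.of_forall heq)
  -- derivative of the product
  have hΨ : HasFDerivAt (fun q => (c q).comp (d q))
      ((compL ℝ (ℝ × ℝ) (ℝ × ℝ) ℝ (c p)).comp ((compL ℝ (ℝ × ℝ) ℝ (ℝ × ℝ) (inl ℝ ℝ ℝ)).comp BF)
        + ((compL ℝ (ℝ × ℝ) (ℝ × ℝ) ℝ).flip (d p)).comp (BG.comp DΦ)) p :=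
    hc.clm_comp hd
  have hΨ0 : HasFDerivAt (fun q => (c q).comp (d q))
      (0 : ℝ × ℝ →L[ℝ] (ℝ × ℝ →L[ℝ] ℝ)) p := by
    have : HasFDerivAt (fun _ : ℝ × ℝ => fst ℝ ℝ ℝ)
        (0 : ℝ × ℝ →L[ℝ] (ℝ × ℝ →L[ℝ] ℝ)) p := hasFDerivAt_const _ _
    exact this.congr_of_eventuallyEq (by filter_upwards [hE] with q hq using hq)
  have hsum : ((compL ℝ (ℝ × ℝ) (ℝ × ℝ) ℝ (c p)).comp ((compL ℝ (ℝ × ℝ) ℝ (ℝ × ℝ) (inl ℝ ℝ ℝ)).comp BF)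
        + ((compL ℝ (ℝ × ℝ) (ℝ × ℝ) ℝ).flip (d p)).comp (BG.comp DΦ)) = 0 :=
    hΨ.unique hΨ0
  set C : ℝ × ℝ →L[ℝ] ℝ := c p with hC_def
  -- key second-order identity
  have key : ∀ v w : ℝ × ℝ, C (BF v w, (0:ℝ)) + BG (DΦ v) (DΦ w) = 0 := by
    intro v w
    have h0 := congrArg (fun (L : ℝ × ℝ →L[ℝ] (ℝ × ℝ →L[ℝ] ℝ)) => (L v) w) hsum
    simp only [add_apply, comp_apply, compL_apply, flip_apply, inl_apply, zero_apply, hdp] at h0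
    exact h0
  -- first-order identity at p
  have hfirst : C.comp DΦ = fst ℝ ℝ ℝ := by
    have := hE.self_of_nhds
    rwa [hdp] at this
  have hCu : ∀ u : ℝ × ℝ, C (DΦ u) = u.1 := fun u =>
    congrFun (congrArg (fun (L : ℝ × ℝ →L[ℝ] ℝ) => (L : ℝ × ℝ → ℝ)) hfirst) u
  -- structure of A
  have hAlin : ∀ x y : ℝ, A (x, y) = x * a + y * A (0, 1) := by
    intro x y
    have hxy : ((x, y) : ℝ × ℝ) = x • ((1:ℝ), (0:ℝ)) + y • ((0:ℝ), (1:ℝ)) := by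
      simp [Prod.ext_iff]
    rw [hxy, map_add, map_smul, map_smul, smul_eq_mul, smul_eq_mul]
  have hDΦ_apply : ∀ v : ℝ × ℝ, DΦ v = (A v, v.2) := fun v => rfl
  -- value of C on (x, 0)
  have hC0 : ∀ x : ℝ, C (x, 0) = x / a := by
    intro x
    have h1 : DΦ (x / a, 0) = (x, 0) := by
      rw [hDΦ_apply]
      have : A (x / a, 0) = x := by
        rw [hAlin]
        field_simp
        ring
      simp [this]
    have := hCu (x / a, 0)
    rw [h1] at this
    simpa using this
  -- the sign-reversing identity
  have hkey2 : ∀ v : ℝ × ℝ, BG (DΦ v) (DΦ v) = -(BF v v) / a := by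
    intro v
    have h1 := key v v
    rw [hC0] at h1
    field_simp at h1 ⊢
    linarith
  -- DΦ is bijective
  have hinj : ∀ v : ℝ × ℝ, DΦ v = 0 → v = 0 := by
    intro v hv
    rw [hDΦ_apply, Prod.ext_iff] at hv
    have hv2 : v.2 = 0 := hv.2
    have hv1 : A v = 0 := hv.1
    have : A (v.1, v.2) = v.1 * a + v.2 * A (0, 1) := hAlin v.1 v.2
    rw [Prod.mk.eta] at this
    rw [this, hv2] at hv1
    have hva : v.1 * a = 0 := by simpa using hv1
    have : v.1 = 0 := (mul_eq_zero.mp hva).resolve_right ha0.ne'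
    exact Prod.ext this hv2
  have hsurj : ∀ w : ℝ × ℝ, ∃ v : ℝ × ℝ, DΦ v = w := by
    intro w
    refine ⟨((w.1 - A (0, w.2)) / a, w.2), ?_⟩
    rw [hDΦ_apply]
    have : A ((w.1 - A (0, w.2)) / a, w.2) = w.1 := by
      rw [hAlin]
      have h02 : A (0, w.2) = w.2 * A (0, 1) := by rw [hAlin]; ring
      rw [← h02]
      field_simp
      ring
    simp [this]
  -- translate iterated derivatives
  have hiF : ∀ v : ℝ × ℝ, iteratedFDeriv ℝ 2 F p ![v, v] = BF v v := by
    intro v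
    rw [iteratedFDeriv_two_apply]
    simp
    rfl
  have hiG : ∀ v : ℝ × ℝ, iteratedFDeriv ℝ 2 G (Φ p) ![v, v] = BG v v := by
    intro v
    rw [iteratedFDeriv_two_apply]
    simp
    rfl
  have hΦp_eq : Φ p = (F (σ₀, n₀), n₀) := rfl
  constructor
  · intro h w hw
    obtain ⟨v, hv⟩ := hsurj w
    have hv0 : v ≠ 0 := by
      rintro rfl
      exact hw (by rw [← hv]; exact map_zero DΦ)
    have hBF : 0 < BF v v := by rw [← hiF v]; exact h v hv0
    have : iteratedFDeriv ℝ 2 G (Φ p) ![w, w] = -(BF v v) / a := by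
      rw [hiG, ← hv, hkey2]
    rw [← hΦp_eq, this]
    exact div_neg_of_neg_of_pos (neg_neg_iff_pos.mpr hBF) ha0
  · intro h v hv
    have hw : DΦ v ≠ 0 := fun hc => hv (hinj v hc)
    have hBG : BG (DΦ v) (DΦ v) < 0 := by
      rw [← hiG]; rw [← hΦp_eq] at h; exact h (DΦ v) hw
    rw [hkey2] at hBG
    rw [hiF]
    have := (div_neg_iff).mp hBG
    rcases this with ⟨h1, h2⟩ | ⟨h1, h2⟩
    · exact absurd h2 (not_lt.mpr ha0.le)
    · linarith
end

section
/- Let ρ : ℝ × ℝ → ℝ be twice continuously differentiable at (n₀, s₀) with n₀ > 0, and set T = (1/n₀)·∂ρ/∂s(n₀,s₀). Define ψ(σ, n) = ρ(n, σ/n) on the region {(σ,n) : n > 0}. Then the Hessian of ψ at the point (n₀·s₀, n₀) is positive definite if and only if both of the following inequalities hold, with all partial derivatives of ρ evaluated at (n₀,s₀): (1) ∂²ρ/∂n² · ∂²ρ/∂s² − (∂²ρ/∂n∂s − T)² > 0, and (2) n₀²·∂²ρ/∂n² + (1 + s₀²)·∂²ρ/∂s² − 2·s₀·n₀·(∂²ρ/∂n∂s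 − T) > 0. -/
open ContinuousLinearMap

private lemma aux_inv (c : ℝ × ℝ) (hc : c.2 ≠ 0) :
    HasFDerivAt (fun p : ℝ × ℝ => (p.2)⁻¹)
      ((-(c.2 ^ 2)⁻¹) • ContinuousLinearMap.snd ℝ ℝ ℝ) c := by
  have h1 : HasFDerivAt (fun x : ℝ => x⁻¹)
      (ContinuousLinearMap.smulRight (1 : ℝ →L[ℝ] ℝ) (-(c.2 ^ 2)⁻¹)) c.2 := by
    exact (hasDerivAt_inv hc).hasFDerivAt
  have h2 := h1.comp c (hasFDerivAt_snd (𝕜 := ℝ) (p := c))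
  refine h2.congr_fderiv ?_
  ext v <;> simp [mul_comm]

private lemma aux_div (c : ℝ × ℝ) (hc : c.2 ≠ 0) :
    HasFDerivAt (fun p : ℝ × ℝ => p.1 / p.2)
      ((c.2)⁻¹ • ContinuousLinearMap.fst ℝ ℝ ℝ
        + (-(c.1 / c.2 ^ 2)) • ContinuousLinearMap.snd ℝ ℝ ℝ) c := by
  have h := (hasFDerivAt_fst (𝕜 := ℝ) (p := c)).mul (aux_inv c hc)
  have e : (fun p : ℝ × ℝ => p.1 * (p.2)⁻¹) = fun p : ℝ × ℝ => p.1 / p.2 := by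
    funext p; rw [div_eq_mul_inv]
  rw [← e]
  refine h.congr_fderiv ?_
  ext v <;> simp <;> ring_nf

private lemma clm_pair (Λ : ℝ × ℝ →L[ℝ] ℝ) (x y : ℝ) :
    Λ (x, y) = x * Λ (1, 0) + y * Λ (0, 1) := by
  have e : ((x, y) : ℝ × ℝ) = x • ((1 : ℝ), (0 : ℝ)) + y • ((0 : ℝ), (1 : ℝ)) := by simp
  rw [e, map_add, map_smul, map_smul, smul_eq_mul, smul_eq_mul]

private lemma clm2_pair (Λ : ℝ × ℝ →L[ℝ] (ℝ × ℝ →L[ℝ] ℝ)) (x y : ℝ) (u : ℝ × ℝ) :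
    Λ (x, y) u = x * Λ (1, 0) u + y * Λ (0, 1) u := by
  have e : ((x, y) : ℝ × ℝ) = x • ((1 : ℝ), (0 : ℝ)) + y • ((0 : ℝ), (1 : ℝ)) := by simp
  rw [e, map_add, map_smul, map_smul]
  simp

private lemma quad_pos_iff (A D C n₀ s₀ : ℝ) (hn₀ : 0 < n₀) :
    (∀ v : ℝ × ℝ, v ≠ 0 →
        0 < A * v.2 ^ 2 + 2 * D * v.2 * ((v.1 - s₀ * v.2) / n₀)
          + C * ((v.1 - s₀ * v.2) / n₀) ^ 2)
    ↔ (0 < A * C - D ^ 2 ∧ 0 < n₀ ^ 2 * A + (1 + s₀ ^ 2) * C - 2 * s₀ * n₀ * D) := by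
  constructor
  · intro h
    have hq1 := h (n₀, 0) (by simp [Prod.mk_eq_zero, hn₀.ne'])
    have hq2 := h (0, 1) (by simp [Prod.mk_eq_zero])
    simp only at hq1 hq2
    rw [show ((n₀:ℝ) - s₀ * 0) / n₀ = 1 by field_simp; ring] at hq1
    have hC : 0 < C := by nlinarith
    have hq3 := h (n₀ * (-D) + s₀ * C, C) (by simp [Prod.mk_eq_zero, hC.ne'])
    simp only at hq3
    rw [show (n₀ * (-D) + s₀ * C - s₀ * C) / n₀ = -D by field_simp; ring] at hq3
    constructor
    · nlinarith
    · rw [show ((0:ℝ) - s₀ * 1) / n₀ = -(s₀ / n₀) by field_simp; ring] at hq2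
      have h2 : 0 < n₀ ^ 2 * (A * 1 ^ 2 + 2 * D * 1 * (-(s₀ / n₀)) + C * (-(s₀ / n₀)) ^ 2) :=
        mul_pos (pow_pos hn₀ 2) hq2
      have e3 : n₀ ^ 2 * (A * 1 ^ 2 + 2 * D * 1 * (-(s₀ / n₀)) + C * (-(s₀ / n₀)) ^ 2)
          = n₀ ^ 2 * A - 2 * s₀ * n₀ * D + s₀ ^ 2 * C := by field_simp; ring
      nlinarith
  · rintro ⟨hdet, hS⟩ v hv
    obtain ⟨v1, v2⟩ := v
    rw [Ne, Prod.mk_eq_zero, not_and_or] at hv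
    simp only
    set w : ℝ := (v1 - s₀ * v2) / n₀ with hw
    have hC0 : C ≠ 0 := by
      intro h0
      rw [h0] at hdet
      nlinarith [sq_nonneg D]
    have hC : 0 < C := by
      rcases hC0.lt_or_gt with hClt | h
      · exfalso
        have hpos : 0 < C * (n₀ ^ 2 * A + (1 + s₀ ^ 2) * C - 2 * s₀ * n₀ * D) := by
          nlinarith [sq_nonneg (C * s₀ - n₀ * D), sq_nonneg C, mul_pos (mul_pos hn₀ hn₀) hdet]
        nlinarith [mul_pos (neg_pos.2 hClt) hS]
      · exact h
    have hbw : v2 ≠ 0 ∨ w ≠ 0 := by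
      rcases hv with h | h
      · rcases eq_or_ne v2 0 with h2 | h2
        · right
          rw [hw, h2]
          intro hww
          apply h
          field_simp at hww
          linarith
        · exact Or.inl h2
      · exact Or.inl h
    rcases eq_or_ne v2 0 with h0 | h0
    · have hw0 : w ≠ 0 := by tauto
      rw [h0]
      have hw2 : 0 < w ^ 2 := by rcases hw0.lt_or_gt with h | h <;> nlinarith
      nlinarith
    · have hb2 : 0 < v2 ^ 2 := by rcases h0.lt_or_gt with h | h <;> nlinarith
      have h1 : 0 < C * (A * v2 ^ 2 + 2 * D * v2 * w + C * w ^ 2) := by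
        have e : C * (A * v2 ^ 2 + 2 * D * v2 * w + C * w ^ 2)
            = (C * w + D * v2) ^ 2 + (A * C - D ^ 2) * v2 ^ 2 := by ring
        rw [e]
        have hx : 0 < (A * C - D ^ 2) * v2 ^ 2 := mul_pos hdet hb2
        nlinarith [sq_nonneg (C * w + D * v2)]
      nlinarith



/-- Positive definiteness of the Hessian of the energy density `ψ(σ,n) = ρ(n, σ/n)`
(energy density as a function of entropy density `σ = s n` and particle density `n`)
is equivalent to the two local thermodynamic stability inequalities (eq. (16) of the
paper). -/
theorem local_thermodynamic_stability_iff
    (ρ : ℝ × ℝ → ℝ) (n₀ s₀ : ℝ) (hn₀ : 0 < n₀)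
    (hρ : ContDiffAt ℝ 2 ρ (n₀, s₀))
    (T : ℝ) (hT : T = (1 / n₀) * fderiv ℝ ρ (n₀, s₀) (0, 1))
    (ψ : ℝ × ℝ → ℝ) (hψ : ∀ σ n : ℝ, 0 < n → ψ (σ, n) = ρ (n, σ / n)) :
    (∀ v : ℝ × ℝ, v ≠ 0 → 0 < iteratedFDeriv ℝ 2 ψ (n₀ * s₀, n₀) ![v, v]) ↔
      (0 < iteratedFDeriv ℝ 2 ρ (n₀, s₀) ![(1, 0), (1, 0)]
              * iteratedFDeriv ℝ 2 ρ (n₀, s₀) ![(0, 1), (0, 1)]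
            - (iteratedFDeriv ℝ 2 ρ (n₀, s₀) ![(1, 0), (0, 1)] - T) ^ 2
        ∧ 0 < n₀ ^ 2 * iteratedFDeriv ℝ 2 ρ (n₀, s₀) ![(1, 0), (1, 0)]
            + (1 + s₀ ^ 2) * iteratedFDeriv ℝ 2 ρ (n₀, s₀) ![(0, 1), (0, 1)]
            - 2 * s₀ * n₀ * (iteratedFDeriv ℝ 2 ρ (n₀, s₀) ![(1, 0), (0, 1)] - T)) := by
  -- notation
  set p₀ : ℝ × ℝ := (n₀ * s₀, n₀) with hp₀def
  set g : ℝ × ℝ → ℝ × ℝ := fun p => (p.2, p.1 / p.2) with hgdef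
  have hgp₀ : g p₀ = (n₀, s₀) := by
    simp only [hgdef, hp₀def]
    rw [mul_comm, mul_div_assoc, div_self hn₀.ne', mul_one]
  set Mg : ℝ × ℝ → (ℝ × ℝ →L[ℝ] ℝ × ℝ) := fun p =>
    (ContinuousLinearMap.snd ℝ ℝ ℝ).prod
      ((p.2)⁻¹ • ContinuousLinearMap.fst ℝ ℝ ℝ
        + (-(p.1 / p.2 ^ 2)) • ContinuousLinearMap.snd ℝ ℝ ℝ) with hMgdef
  have hMg : ∀ p : ℝ × ℝ, p.2 ≠ 0 → HasFDerivAt g (Mg p) p := fun p hp =>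
    (hasFDerivAt_snd (𝕜 := ℝ) (p := p)).prodMk (aux_div p hp)
  have hp₀2 : (0:ℝ) < p₀.2 := hn₀
  -- eventual facts
  have hρev : ∀ᶠ y in nhds ((n₀, s₀) : ℝ × ℝ), ContDiffAt ℝ 2 ρ y := hρ.eventually (by norm_num)
  have hU : ∀ᶠ p : ℝ × ℝ in nhds p₀, 0 < p.2 :=
    (isOpen_lt continuous_const continuous_snd).eventually_mem hp₀2
  have hgc : ContinuousAt g p₀ :=
    continuousAt_snd.prodMk (continuousAt_fst.div continuousAt_snd hn₀.ne')
  have hρevg : ∀ᶠ p in nhds p₀, ContDiffAt ℝ 2 ρ (g p) := by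
    apply hgc.tendsto.eventually
    rw [hgp₀]
    exact hρev
  have hψρ : ∀ᶠ p in nhds p₀, ψ p = ρ (g p) := hU.mono fun p hp => hψ p.1 p.2 hp
  have hL : ∀ᶠ p in nhds p₀, HasFDerivAt ψ ((fderiv ℝ ρ (g p)).comp (Mg p)) p := by
    filter_upwards [hU, hρevg, hψρ.eventually_nhds] with p hp hcd hev
    have h1 : HasFDerivAt (fun q => ρ (g q)) ((fderiv ℝ ρ (g p)).comp (Mg p)) p :=
      ((hcd.differentiableAt (by norm_num)).hasFDerivAt).comp p (hMg p hp.ne')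
    exact h1.congr_of_eventuallyEq hev
  have hfψ : fderiv ℝ ψ =ᶠ[nhds p₀] fun p => (fderiv ℝ ρ (g p)).comp (Mg p) :=
    hL.mono fun p h => h.fderiv
  -- ψ is C² at p₀
  have hg2 : ContDiffAt ℝ 2 g p₀ :=
    contDiffAt_snd.prodMk (contDiffAt_fst.div contDiffAt_snd hn₀.ne')
  have hρ' : ContDiffAt ℝ 2 ρ (g p₀) := by rw [hgp₀]; exact hρ
  have hψ2 : ContDiffAt ℝ 2 ψ p₀ := (hρ'.comp p₀ hg2).congr_of_eventuallyEq hψρ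
  have hdψ : DifferentiableAt ℝ (fderiv ℝ ψ) p₀ :=
    (hψ2.fderiv_right (m := 1) (by norm_num)).differentiableAt one_ne_zero
  -- second derivative of ρ
  have hDρ : HasFDerivAt (fderiv ℝ ρ) (fderiv ℝ (fderiv ℝ ρ) (n₀, s₀)) (n₀, s₀) :=
    ((hρ.fderiv_right (m := 1) (by norm_num)).differentiableAt one_ne_zero).hasFDerivAt
  set D2 : ℝ × ℝ →L[ℝ] (ℝ × ℝ →L[ℝ] ℝ) := fderiv ℝ (fderiv ℝ ρ) (n₀, s₀) with hD2def
  have hsymm : D2 ((0:ℝ), (1:ℝ)) ((1:ℝ), (0:ℝ)) = D2 ((1:ℝ), (0:ℝ)) ((0:ℝ), (1:ℝ)) :=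
    second_derivative_symmetric_of_eventually
      (hρev.mono fun y hy => (hy.differentiableAt (by norm_num)).hasFDerivAt) hDρ _ _
  set A : ℝ := D2 ((1:ℝ), (0:ℝ)) ((1:ℝ), (0:ℝ)) with hAdef
  set B : ℝ := D2 ((1:ℝ), (0:ℝ)) ((0:ℝ), (1:ℝ)) with hBdef
  set C : ℝ := D2 ((0:ℝ), (1:ℝ)) ((0:ℝ), (1:ℝ)) with hCdef
  have hE : fderiv ℝ ρ (n₀, s₀) ((0:ℝ), (1:ℝ)) = n₀ * T := by
    rw [hT]; field_simp
  -- key pointwise formula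
  have key : ∀ v : ℝ × ℝ, iteratedFDeriv ℝ 2 ψ p₀ ![v, v]
      = A * v.2 ^ 2 + 2 * (B - T) * v.2 * ((v.1 - s₀ * v.2) / n₀)
        + C * ((v.1 - s₀ * v.2) / n₀) ^ 2 := by
    intro v
    -- directional derivative functions
    have h1 : HasFDerivAt (fun x : ℝ × ℝ => fderiv ℝ ρ x ((1:ℝ), (0:ℝ)))
        ((ContinuousLinearMap.apply ℝ ℝ ((1:ℝ), (0:ℝ))).comp D2) (n₀, s₀) :=
      ((ContinuousLinearMap.apply ℝ ℝ ((1:ℝ), (0:ℝ))).hasFDerivAt).comp (n₀, s₀) hDρ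
    have h2 : HasFDerivAt (fun x : ℝ × ℝ => fderiv ℝ ρ x ((0:ℝ), (1:ℝ)))
        ((ContinuousLinearMap.apply ℝ ℝ ((0:ℝ), (1:ℝ))).comp D2) (n₀, s₀) :=
      ((ContinuousLinearMap.apply ℝ ℝ ((0:ℝ), (1:ℝ))).hasFDerivAt).comp (n₀, s₀) hDρ
    rw [← hgp₀] at h1 h2
    have h1' : HasFDerivAt (fun p : ℝ × ℝ => fderiv ℝ ρ (g p) ((1:ℝ), (0:ℝ)))
        (((ContinuousLinearMap.apply ℝ ℝ ((1:ℝ), (0:ℝ))).comp D2).comp (Mg p₀)) p₀ :=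
      h1.comp p₀ (hMg p₀ hn₀.ne')
    have h2' : HasFDerivAt (fun p : ℝ × ℝ => fderiv ℝ ρ (g p) ((0:ℝ), (1:ℝ)))
        (((ContinuousLinearMap.apply ℝ ℝ ((0:ℝ), (1:ℝ))).comp D2).comp (Mg p₀)) p₀ :=
      h2.comp p₀ (hMg p₀ hn₀.ne')
    have hd1 := aux_div p₀ hn₀.ne'
    have hd2 := aux_inv p₀ hn₀.ne'
    -- total derivative of p ↦ (fderiv ψ p) v in explicit form
    have htot := (h1'.const_mul v.2).add
      ((((hd2.const_mul v.1)).sub ((hd1.mul hd2).const_mul v.2)).mul h2')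
    have hvdec : (fun p : ℝ × ℝ => ((fderiv ℝ ρ (g p)).comp (Mg p)) v)
        = fun p : ℝ × ℝ => v.2 * fderiv ℝ ρ (g p) ((1:ℝ), (0:ℝ))
            + (v.1 * (p.2)⁻¹ - v.2 * (p.1 / p.2 * (p.2)⁻¹))
              * fderiv ℝ ρ (g p) ((0:ℝ), (1:ℝ)) := by
      funext p
      have hMgv : Mg p v = (v.2, (p.2)⁻¹ * v.1 + (-(p.1 / p.2 ^ 2)) * v.2) := by
        simp [hMgdef]
      rw [ContinuousLinearMap.comp_apply, hMgv, clm_pair]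
      ring
    have hfev : (fun p : ℝ × ℝ => fderiv ℝ ψ p v)
        =ᶠ[nhds p₀] fun p : ℝ × ℝ => v.2 * fderiv ℝ ρ (g p) ((1:ℝ), (0:ℝ))
            + (v.1 * (p.2)⁻¹ - v.2 * (p.1 / p.2 * (p.2)⁻¹))
              * fderiv ℝ ρ (g p) ((0:ℝ), (1:ℝ)) := by
      rw [← hvdec]
      exact hfψ.fun_comp fun M : ℝ × ℝ →L[ℝ] ℝ => M v
    have step1 : iteratedFDeriv ℝ 2 ψ p₀ ![v, v] = fderiv ℝ (fderiv ℝ ψ) p₀ v v := by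
      rw [iteratedFDeriv_two_apply]
      simp
    have step2 : fderiv ℝ (fun p : ℝ × ℝ => fderiv ℝ ψ p v) p₀
        = (fderiv ℝ (fderiv ℝ ψ) p₀).flip v := by
      rw [fderiv_clm_apply hdψ (differentiableAt_const v), fderiv_fun_const]
      simp
    have step3 : fderiv ℝ (fun p : ℝ × ℝ => fderiv ℝ ψ p v) p₀ = _ := hfev.fderiv_eq
    rw [step1, ← ContinuousLinearMap.flip_apply, ← step2, step3, HasFDerivAt.fderiv (f := fun p : ℝ × ℝ => v.2 * fderiv ℝ ρ (g p) ((1:ℝ), (0:ℝ))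
        + (v.1 * (p.2)⁻¹ - v.2 * (p.1 / p.2 * (p.2)⁻¹)) * fderiv ℝ ρ (g p) ((0:ℝ), (1:ℝ))) htot]
    -- now evaluate the explicit continuous linear map at v
    have hgp₀1 : p₀.1 = n₀ * s₀ := rfl
    have hgp₀2 : p₀.2 = n₀ := rfl
    rw [hgp₀]
    simp only [ContinuousLinearMap.add_apply, ContinuousLinearMap.smul_apply,
      ContinuousLinearMap.comp_apply, ContinuousLinearMap.sub_apply,
      ContinuousLinearMap.apply_apply, ContinuousLinearMap.coe_fst',
      ContinuousLinearMap.coe_snd', ContinuousLinearMap.prod_apply, smul_eq_mul,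
      hMgdef, hgp₀1, hgp₀2, hE, Pi.sub_apply, Pi.mul_apply]
    simp only [clm2_pair D2 v.2 (n₀⁻¹ * v.1 + -(n₀ * s₀ / n₀ ^ 2) * v.2), hsymm]
    field_simp
    ring
  rw [show (∀ v : ℝ × ℝ, v ≠ 0 → 0 < iteratedFDeriv ℝ 2 ψ p₀ ![v, v]) ↔
      (∀ v : ℝ × ℝ, v ≠ 0 →
        0 < A * v.2 ^ 2 + 2 * (B - T) * v.2 * ((v.1 - s₀ * v.2) / n₀)
          + C * ((v.1 - s₀ * v.2) / n₀) ^ 2) from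
    forall_congr' fun v => by rw [key v]]
  have hρA : iteratedFDeriv ℝ 2 ρ (n₀, s₀) ![(1, 0), (1, 0)] = A := by
    rw [iteratedFDeriv_two_apply]; simp [hAdef, hD2def]
  have hρB : iteratedFDeriv ℝ 2 ρ (n₀, s₀) ![(1, 0), (0, 1)] = B := by
    rw [iteratedFDeriv_two_apply]; simp [hBdef, hD2def]
  have hρC : iteratedFDeriv ℝ 2 ρ (n₀, s₀) ![(0, 1), (0, 1)] = C := by
    rw [iteratedFDeriv_two_apply]; simp [hCdef, hD2def]
  rw [hρA, hρB, hρC]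
  exact quad_pos_iff A (B - T) C n₀ s₀ hn₀
end

section
/- Let (X, 𝔪) be a measure space with 0 < 𝔪(X) < ∞, and let a, b, c : X → ℝ be bounded measurable functions with b(x) > 0 for 𝔪-almost every x. Then the following are equivalent: (i) each of a, b, c is 𝔪-almost everywhere equal to a constant; (ii) for all integrable functions f, g, h : X → ℝ satisfying ∫f d𝔪 = 0, ∫h d𝔪 = 0, and ∫(a·f + b·g + c·h) d𝔪 = 0, one has ∫g d𝔪 = 0. -/
open MeasureTheory

private lemma aux_ae_const {X : Type*} [MeasurableSpace X] (𝔪 : Measure X)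
    [IsFiniteMeasure 𝔪] (a : X → ℝ) (hma : Measurable a)
    (hba : ∃ C : ℝ, ∀ x, |a x| ≤ C)
    (H : ∀ f : X → ℝ, Integrable f 𝔪 → (∫ x, f x ∂𝔪) = 0 →
      (∫ x, a x * f x ∂𝔪) = 0) :
    ∃ k : ℝ, a =ᵐ[𝔪] fun _ => k := by
  obtain ⟨C, hC⟩ := hba
  have hia : Integrable a 𝔪 :=
    ⟨hma.aestronglyMeasurable, HasFiniteIntegral.of_bounded (C := C)
      (Filter.Eventually.of_forall fun x => by simpa using hC x)⟩
  rcases eq_or_ne (𝔪 Set.univ) 0 with h0 | h0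
  · refine ⟨0, ?_⟩
    have : 𝔪 = 0 := Measure.measure_univ_eq_zero.mp h0
    simp only [this, ae_zero]
    exact Filter.eventually_bot
  set α : ℝ := (∫ x, a x ∂𝔪) / (𝔪 Set.univ).toReal with hα
  have htpos : 0 < (𝔪 Set.univ).toReal :=
    ENNReal.toReal_pos h0 (measure_lt_top 𝔪 _).ne
  set f : X → ℝ := fun x => a x - α with hf
  have hif : Integrable f 𝔪 := hia.sub (integrable_const α)
  have hintf : (∫ x, f x ∂𝔪) = 0 := by
    rw [hf]
    rw [integral_sub hia (integrable_const α), integral_const, smul_eq_mul, measureReal_def, hα]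
    field_simp; ring
  have haf : (∫ x, a x * f x ∂𝔪) = 0 := H f hif hintf
  have hsq : (∫ x, (a x - α) * f x ∂𝔪) = 0 := by
    have hiaf : Integrable (fun x => a x * f x) 𝔪 :=
      hif.bdd_mul hma.aestronglyMeasurable (c := C) (Filter.Eventually.of_forall fun x => by simpa using hC x)
    have : (∫ x, (a x - α) * f x ∂𝔪)
        = (∫ x, a x * f x ∂𝔪) - α * (∫ x, f x ∂𝔪) := by
      rw [← integral_const_mul, ← integral_sub hiaf (hif.const_mul α)]
      congr 1; ext x; ring
    rw [this, haf, hintf]; ring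
  have hnn : 0 ≤ᵐ[𝔪] fun x => (a x - α) * f x :=
    Filter.Eventually.of_forall fun x => by rw [hf]; exact mul_self_nonneg _
  have hisq : Integrable (fun x => (a x - α) * f x) 𝔪 :=
    hif.bdd_mul (hma.sub measurable_const).aestronglyMeasurable
      (c := C + |α|) (Filter.Eventually.of_forall fun x => by
        simpa using (abs_sub (a x) α).trans (add_le_add (hC x) le_rfl))
  have := (integral_eq_zero_iff_of_nonneg_ae hnn hisq).mp hsq
  refine ⟨α, this.mono fun x hx => ?_⟩
  have hx' : (a x - α) * (a x - α) = 0 := hx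
  have := mul_self_eq_zero.mp hx'
  simpa [sub_eq_zero] using this

/-- Integration-theoretic core of Theorem 1: with `b > 0` a.e., the functions `a, b, c`
are a.e. constant iff every integrable triple `(f,g,h)` with `∫ f = 0`, `∫ h = 0` and
`∫ (a f + b g + c h) = 0` has `∫ g = 0`. -/
theorem ae_const_iff_forced_vanishing
    {X : Type*} [MeasurableSpace X] (𝔪 : Measure X)
    (h𝔪0 : 0 < 𝔪 Set.univ) (h𝔪fin : 𝔪 Set.univ < ⊤)
    (a b c : X → ℝ)
    (hma : Measurable a) (hmb : Measurable b) (hmc : Measurable c)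
    (hba : ∃ C : ℝ, ∀ x, |a x| ≤ C) (hbb : ∃ C : ℝ, ∀ x, |b x| ≤ C)
    (hbc : ∃ C : ℝ, ∀ x, |c x| ≤ C)
    (hbpos : ∀ᵐ x ∂𝔪, 0 < b x) :
    ((∃ ka : ℝ, a =ᵐ[𝔪] fun _ => ka) ∧ (∃ kb : ℝ, b =ᵐ[𝔪] fun _ => kb)
        ∧ (∃ kc : ℝ, c =ᵐ[𝔪] fun _ => kc)) ↔
      (∀ f g h : X → ℝ, Integrable f 𝔪 → Integrable g 𝔪 → Integrable h 𝔪 →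
        (∫ x, f x ∂𝔪) = 0 → (∫ x, h x ∂𝔪) = 0 →
        (∫ x, (a x * f x + b x * g x + c x * h x) ∂𝔪) = 0 →
        (∫ x, g x ∂𝔪) = 0) := by
  haveI : IsFiniteMeasure 𝔪 := ⟨h𝔪fin⟩
  have htpos : 0 < (𝔪 Set.univ).toReal := ENNReal.toReal_pos h𝔪0.ne' h𝔪fin.ne
  -- integrability of bounded measurable functions
  have hbd_int : ∀ (u : X → ℝ), Measurable u → (∃ C : ℝ, ∀ x, |u x| ≤ C) →
      Integrable u 𝔪 := by
    rintro u hmu ⟨C, hC⟩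
    exact ⟨hmu.aestronglyMeasurable, HasFiniteIntegral.of_bounded (C := C)
      (Filter.Eventually.of_forall fun x => by simpa using hC x)⟩
  have hib : Integrable b 𝔪 := hbd_int b hmb hbb
  have hintb_pos : 0 < ∫ x, b x ∂𝔪 := by
    have hnn : 0 ≤ᵐ[𝔪] b := hbpos.mono fun x hx => hx.le
    rcases lt_or_eq_of_le (integral_nonneg_of_ae hnn) with hlt | heq
    · exact hlt
    · exfalso
      have hb0 : b =ᵐ[𝔪] 0 := (integral_eq_zero_iff_of_nonneg_ae hnn hib).mp heq.symm
      have : ∀ᵐ x ∂𝔪, False := (hbpos.and hb0).mono fun x ⟨h1, h2⟩ => by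
        rw [Pi.zero_apply] at h2; exact absurd h2 h1.ne'
      rw [ae_iff] at this
      simp only [not_false_iff, Set.setOf_true] at this
      exact h𝔪0.ne' this
  constructor
  · rintro ⟨⟨ka, hka⟩, ⟨kb, hkb⟩, ⟨kc, hkc⟩⟩ f g h hif hig hih hf0 hh0 hsum
    have hkb_pos : 0 < kb := by
      have : ∀ᵐ x ∂𝔪, 0 < kb := (hbpos.and hkb).mono fun x ⟨h1, h2⟩ => lt_of_lt_of_eq h1 h2
      by_contra hkb'
      have : ∀ᵐ x ∂𝔪, False := this.mono fun x hx => hkb' hx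
      rw [ae_iff] at this
      simp only [not_false_iff, Set.setOf_true] at this
      exact h𝔪0.ne' this
    have hrw : (∫ x, (a x * f x + b x * g x + c x * h x) ∂𝔪)
        = (∫ x, (ka * f x + kb * g x + kc * h x) ∂𝔪) := by
      apply integral_congr_ae
      filter_upwards [hka, hkb, hkc] with x ha hb hc
      rw [ha, hb, hc]
    have hi1 : Integrable (fun x => ka * f x) 𝔪 := hif.const_mul ka
    have hi2 : Integrable (fun x => kb * g x) 𝔪 := hig.const_mul kb
    have hi3 : Integrable (fun x => kc * h x) 𝔪 := hih.const_mul kc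
    have hi12 : Integrable (fun x => ka * f x + kb * g x) 𝔪 := hi1.add hi2
    rw [hrw, integral_add hi12 hi3, integral_add hi1 hi2,
      integral_const_mul, integral_const_mul, integral_const_mul,
      hf0, hh0] at hsum
    have : kb * ∫ x, g x ∂𝔪 = 0 := by linarith
    exact (mul_eq_zero.mp this).resolve_left hkb_pos.ne' 
  · intro H
    -- b is a.e. constant
    have Hb : ∀ g : X → ℝ, Integrable g 𝔪 → (∫ x, b x * g x ∂𝔪) = 0 →
        (∫ x, g x ∂𝔪) = 0 := by
      intro g hig hg
      refine H 0 g 0 (integrable_zero _ _ _) hig (integrable_zero _ _ _)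
        (by simp) (by simp) ?_
      simpa using hg
    have hkb : ∃ kb : ℝ, b =ᵐ[𝔪] fun _ => kb := by
      apply aux_ae_const 𝔪 b hmb hbb
      intro g hig hg0
      -- adjust g by a constant so that ∫ b * g' = 0
      set t : ℝ := -(∫ x, b x * g x ∂𝔪) / (∫ x, b x ∂𝔪) with ht
      have hig' : Integrable (fun x => g x + t) 𝔪 := hig.add (integrable_const t)
      have hibg : Integrable (fun x => b x * g x) 𝔪 := by
        obtain ⟨C, hC⟩ := hbb
        exact hig.bdd_mul hmb.aestronglyMeasurable (c := C) (Filter.Eventually.of_forall fun x => by simpa using hC x)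
      have hbg' : (∫ x, b x * (g x + t) ∂𝔪) = 0 := by
        have : (∫ x, b x * (g x + t) ∂𝔪)
            = (∫ x, b x * g x ∂𝔪) + t * (∫ x, b x ∂𝔪) := by
          rw [← integral_const_mul, ← integral_add hibg (hib.const_mul t)]
          congr 1; ext x; ring
        rw [this, ht]; field_simp [hintb_pos.ne']; ring
      have := Hb _ hig' hbg'
      rw [integral_add hig (integrable_const t), hg0, integral_const,
        smul_eq_mul, zero_add] at this
      have ht0 : t = 0 := by
        rcases mul_eq_zero.mp this with h | h
        · exact absurd h htpos.ne'
        · exact h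
      rw [ht] at ht0
      field_simp [hintb_pos.ne'] at ht0
      linarith
    -- a is a.e. constant
    have hka : ∃ ka : ℝ, a =ᵐ[𝔪] fun _ => ka := by
      apply aux_ae_const 𝔪 a hma hba
      intro f hif hf0
      -- choose g constant such that ∫ (a f + b g) = 0
      set t : ℝ := -(∫ x, a x * f x ∂𝔪) / (∫ x, b x ∂𝔪) with ht
      have hiaf : Integrable (fun x => a x * f x) 𝔪 := by
        obtain ⟨C, hC⟩ := hba
        exact hif.bdd_mul hma.aestronglyMeasurable (c := C) (Filter.Eventually.of_forall fun x => by simpa using hC x)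
      have hsum : (∫ x, (a x * f x + b x * t + c x * 0) ∂𝔪) = 0 := by
        have : (∫ x, (a x * f x + b x * t + c x * 0) ∂𝔪)
            = (∫ x, a x * f x ∂𝔪) + t * (∫ x, b x ∂𝔪) := by
          rw [← integral_const_mul, ← integral_add hiaf (hib.const_mul t)]
          congr 1; ext x; ring
        rw [this, ht]; field_simp [hintb_pos.ne']; ring
      have := H f (fun _ => t) 0 hif (integrable_const t) (integrable_zero _ _ _)
        hf0 (by simp) hsum
      rw [integral_const, smul_eq_mul] at this
      have ht0 : t = 0 := by
        rcases mul_eq_zero.mp this with h | h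
        · exact absurd h htpos.ne'
        · exact h
      rw [ht] at ht0
      field_simp [hintb_pos.ne'] at ht0
      linarith
    -- c is a.e. constant
    have hkc : ∃ kc : ℝ, c =ᵐ[𝔪] fun _ => kc := by
      apply aux_ae_const 𝔪 c hmc hbc
      intro h hih hh0
      set t : ℝ := -(∫ x, c x * h x ∂𝔪) / (∫ x, b x ∂𝔪) with ht
      have hich : Integrable (fun x => c x * h x) 𝔪 := by
        obtain ⟨C, hC⟩ := hbc
        exact hih.bdd_mul hmc.aestronglyMeasurable (c := C) (Filter.Eventually.of_forall fun x => by simpa using hC x)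
      have hsum : (∫ x, (a x * 0 + b x * t + c x * h x) ∂𝔪) = 0 := by
        have : (∫ x, (a x * 0 + b x * t + c x * h x) ∂𝔪)
            = (∫ x, c x * h x ∂𝔪) + t * (∫ x, b x ∂𝔪) := by
          rw [← integral_const_mul, ← integral_add hich (hib.const_mul t)]
          congr 1; ext x; ring
        rw [this, ht]; field_simp [hintb_pos.ne']; ring
      have := H 0 (fun _ => t) h (integrable_zero _ _ _) (integrable_const t) hih
        (by simp) hh0 hsum
      rw [integral_const, smul_eq_mul] at this
      have ht0 : t = 0 := by
        rcases mul_eq_zero.mp this with h | h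
        · exact absurd h htpos.ne'
        · exact h
      rw [ht] at ht0
      field_simp [hintb_pos.ne'] at ht0
      linarith
    exact ⟨hka, hkb, hkc⟩
end

section
/- Let K be a real Hilbert space and let Ŵ : K → K be a surjective linear isometry satisfying Ŵ(Ŵ(x)) = −x for all x ∈ K. For a subspace 𝒮 ⊆ K, define its symplectic complement 𝒮^⊥ₛ := {v ∈ K : ⟨v, Ŵ(u)⟩ = 0 for all u ∈ 𝒮}. Let 𝒢 ⊆ K be a subspace and set 𝒞 := 𝒢^⊥ₛ. Then {v ∈ 𝒞 : ⟨v, Ŵ(u)⟩ = 0 for all u ∈ 𝒞} = 𝒞 ∩ closure(𝒢); that is, the degeneracies of the symplectic pairing restricted to 𝒞 × 𝒞 are precisely the elements of the closure of 𝒢 lying in 𝒞. -/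
/-- Let `𝒢` be a subspace of a real Hilbert space `K`, `Ŵ` a surjective linear isometry
with `Ŵ² = -I`, and `𝒞 := 𝒢^⊥ₛ` its symplectic complement. Then the degeneracies of the
symplectic pairing restricted to `𝒞 × 𝒞` are exactly `𝒞 ∩ closure 𝒢`. -/
theorem degeneracies_of_restricted_symplectic_form
    {K : Type*} [NormedAddCommGroup K] [InnerProductSpace ℝ K] [CompleteSpace K]
    (W : K →ₗᵢ[ℝ] K) (hsurj : Function.Surjective W)
    (hW2 : ∀ x : K, W (W x) = -x)
    (G : Submodule ℝ K) (C : Set K)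
    (hC : C = {v : K | ∀ u ∈ G, (inner ℝ v (W u) : ℝ) = 0}) :
    {v ∈ C | ∀ u ∈ C, (inner ℝ v (W u) : ℝ) = 0} = C ∩ closure (G : Set K) := by
  have hWW : ∀ v u : K, (inner ℝ v (W u) : ℝ) = - inner ℝ (W v) u := by
    intro v u
    have h := W.inner_map_map v (W u)
    rw [hW2, inner_neg_right] at h
    linarith
  set M : Submodule ℝ K := G.map W.toLinearMap with hM
  have hCset : C = (Mᗮ : Set K) := by
    rw [hC]; ext v
    simp only [Set.mem_setOf_eq, SetLike.mem_coe, Submodule.mem_orthogonal, hM,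
      Submodule.mem_map, LinearIsometry.coe_toLinearMap]
    constructor
    · rintro h u ⟨x, hx, rfl⟩
      rw [real_inner_comm]; exact h x hx
    · intro h u hu
      rw [real_inner_comm]; exact h (W u) ⟨u, hu, rfl⟩
  have hclosM : (Mᗮᗮ : Set K) = closure (M : Set K) := by
    rw [Submodule.orthogonal_orthogonal_eq_closure]
    rfl
  have hMset : (M : Set K) = W '' (G : Set K) := by
    ext x; simp [hM]
  have hinj : Function.Injective W := W.injective
  have himg : closure ((W : K → K) '' (G : Set K)) = (W : K → K) '' closure (G : Set K) := by
    let e := LinearIsometryEquiv.ofSurjective W hsurj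
    have hecoe : (e : K → K) = (W : K → K) := rfl
    rw [← hecoe]
    exact (e.toHomeomorph.image_closure (G : Set K)).symm
  ext v
  simp only [Set.mem_setOf_eq, Set.mem_inter_iff]
  constructor
  · rintro ⟨hvC, hdeg⟩
    refine ⟨hvC, ?_⟩
    have hWv : W v ∈ Mᗮᗮ := by
      intro u hu
      rw [real_inner_comm]
      have := hdeg u (by rw [hCset]; exact hu)
      rw [hWW] at this
      linarith
    have : W v ∈ closure ((W : K → K) '' (G : Set K)) := by
      rw [← hMset, ← hclosM]; exact hWv
    rw [himg] at this
    obtain ⟨x, hx, hxe⟩ := this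
    rwa [← hinj hxe]
  · rintro ⟨hvC, hvcl⟩
    refine ⟨hvC, ?_⟩
    intro u huC
    have hWv : W v ∈ closure ((W : K → K) '' (G : Set K)) := by
      rw [himg]; exact ⟨v, hvcl, rfl⟩
    rw [← hMset, ← hclosM] at hWv
    have huM : u ∈ Mᗮ := by rw [hCset] at huC; exact huC
    rw [hWW v u]
    have h0 : (inner ℝ u (W v) : ℝ) = 0 := hWv u huM
    rw [real_inner_comm (W v) u] at h0
    rw [h0, neg_zero]
end
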